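/- Under the standing assumptions, let (φ_i)_{i∈ℕ} be any enumeration of all first-order formulas with one distinguished root variable y (φ_i having p_i ≥ 0 further free variables). Then there exists an extending collection of roots: vertices r_n^i ∈ ξ(G_n) and r^i ∈ ξ(L) for all i,n ∈ ℕ such that for all j ≤ i, lim_n ⟨φ_j,(G_n,r_n^i)⟩ = ⟨φ_j,(L,r^i)⟩, and moreover ⟨φ_j,(L,r^i)⟩ = ⟨φ_j,(L,r^{i'})⟩ for all i' ≥ i ≥ j. -/

import Mathlib

open FirstOrder Language MeasureTheory Filter
open scoped ENNReal

/-- The set of solutions of a formula `φ` in `p` free variables in a graph. -/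
def solSet {V : Type} (G : SimpleGraph V) {p : ℕ}
    (φ : Language.graph.Formula (Fin p)) : Set (Fin p → V) :=
  letI := G.structure
  {v | φ.Realize v}

/-- The set of solutions of a rooted formula `φ(x₁,…,x_p,y)` with the root variable `y`
interpreted as `r`. -/
def solSetR {V : Type} (G : SimpleGraph V) {p : ℕ}
    (φ : Language.graph.Formula (Fin (p + 1))) (r : V) : Set (Fin p → V) :=
  letI := G.structure
  {v | φ.Realize (Fin.snoc v r)}

/-- The set of solutions of a one-variable formula. -/
def sol1 {V : Type} (G : SimpleGraph V) (ξ : Language.graph.Formula (Fin 1)) : Set V :=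
  letI := G.structure
  {v : V | ξ.Realize (fun _ => v)}

/-- Stone pairing `⟨φ,G⟩` of a formula and a finite graph. -/
noncomputable def stoneG {V : Type} (fV : Fintype V) (G : SimpleGraph V) {p : ℕ}
    (φ : Language.graph.Formula (Fin p)) : ℝ :=
  (Nat.card (solSet G φ) : ℝ) / (Fintype.card V : ℝ) ^ p

/-- Rooted Stone pairing `⟨φ,(G,r)⟩` of a rooted formula and a finite graph with root `r`. -/
noncomputable def stoneGR {V : Type} (fV : Fintype V) (G : SimpleGraph V) {p : ℕ}
    (φ : Language.graph.Formula (Fin (p + 1))) (r : V) : ℝ :=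
  (Nat.card (solSetR G φ r) : ℝ) / (Fintype.card V : ℝ) ^ p

/-- Stone pairing `⟨φ,L⟩` of a formula and a modeling. -/
noncomputable def stoneL {W : Type} [MeasurableSpace W] (L : SimpleGraph W)
    (ν : Measure W) {p : ℕ} (φ : Language.graph.Formula (Fin p)) : ℝ :=
  ((Measure.pi fun _ : Fin p => ν) (solSet L φ)).toReal

/-- Rooted Stone pairing `⟨φ,(L,r)⟩` of a rooted formula and a modeling with root `r`. -/
noncomputable def stoneLR {W : Type} [MeasurableSpace W] (L : SimpleGraph W)
    (ν : Measure W) {p : ℕ} (φ : Language.graph.Formula (Fin (p + 1))) (r : W) : ℝ :=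
  ((Measure.pi fun _ : Fin p => ν) (solSetR L φ r)).toReal

-- auxiliary development

lemma measurable_snoc {W : Type} [MeasurableSpace W] {p : ℕ} (r : W) :
    Measurable (fun v : Fin p → W => (Fin.snoc v r : Fin (p+1) → W)) := by
  rw [measurable_pi_iff]
  intro i
  induction i using Fin.lastCases with
  | last => simpa using measurable_const
  | cast i => simpa using measurable_pi_apply i

lemma solSetR_eq_preimage {W : Type} (L : SimpleGraph W) {p : ℕ}
    (φ : Language.graph.Formula (Fin (p+1))) (r : W) :
    solSetR L φ r = (fun v : Fin p → W => (Fin.snoc v r : Fin (p+1) → W)) ⁻¹' solSet L φ := rfl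

lemma meas_solSetR {W : Type} [MeasurableSpace W] (L : SimpleGraph W)
    (hmeas : ∀ (p : ℕ) (φ : Language.graph.Formula (Fin p)), MeasurableSet (solSet L φ))
    {p : ℕ} (φ : Language.graph.Formula (Fin (p+1))) (r : W) :
    MeasurableSet (solSetR L φ r) := by
  rw [solSetR_eq_preimage]
  exact (hmeas _ φ).preimage (measurable_snoc r)

-- ## combine
namespace RootProof
noncomputable section
variable {V : Type} {W : Type}

def g1 (q p : ℕ) : Fin (q+1) → Fin (q+p+1) :=
  Fin.lastCases (Fin.last (q+p)) (fun i => ((i.castAdd p).castSucc))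

def g2 (q p : ℕ) : Fin (p+1) → Fin (q+p+1) :=
  Fin.lastCases (Fin.last (q+p)) (fun i => ((i.natAdd q).castSucc))

def combineF {q p : ℕ} (ψ₁ : Language.graph.Formula (Fin (q+1)))
    (ψ₂ : Language.graph.Formula (Fin (p+1))) : Language.graph.Formula (Fin (q+p+1)) :=
  ψ₁.relabel (g1 q p) ⊓ ψ₂.relabel (g2 q p)

lemma snoc_comp_g1 {q p : ℕ} (v : Fin (q+p) → V) (r : V) :
    (Fin.snoc v r : Fin (q+p+1) → V) ∘ g1 q p
      = (Fin.snoc (v ∘ Fin.castAdd p) r : Fin (q+1) → V) := by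
  funext i
  induction i using Fin.lastCases with
  | last => simp [g1]
  | cast i => simp [g1]

lemma snoc_comp_g2 {q p : ℕ} (v : Fin (q+p) → V) (r : V) :
    (Fin.snoc v r : Fin (q+p+1) → V) ∘ g2 q p
      = (Fin.snoc (v ∘ Fin.natAdd q) r : Fin (p+1) → V) := by
  funext i
  induction i using Fin.lastCases with
  | last => simp [g2]
  | cast i => simp only [g2, Function.comp_apply, Fin.lastCases_castSucc, Fin.snoc_castSucc]

lemma solSetR_combineF {q p : ℕ} (G : SimpleGraph V)
    (ψ₁ : Language.graph.Formula (Fin (q+1))) (ψ₂ : Language.graph.Formula (Fin (p+1)))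
    (r : V) :
    solSetR G (combineF ψ₁ ψ₂) r
      = (fun v : Fin (q+p) → V => ((v ∘ Fin.castAdd p, v ∘ Fin.natAdd q) :
          (Fin q → V) × (Fin p → V))) ⁻¹' ((solSetR G ψ₁ r) ×ˢ (solSetR G ψ₂ r)) := by
  letI := G.structure
  ext v
  simp only [solSetR, combineF, Set.mem_setOf_eq, Set.mem_preimage, Set.mem_prod,
    Formula.realize_inf, Formula.realize_relabel, snoc_comp_g1, snoc_comp_g2]

lemma natCard_solSetR_combineF (fV : Fintype V) (G : SimpleGraph V) {q p : ℕ}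
    (ψ₁ : Language.graph.Formula (Fin (q+1))) (ψ₂ : Language.graph.Formula (Fin (p+1)))
    (r : V) :
    Nat.card (solSetR G (combineF ψ₁ ψ₂) r)
      = Nat.card (solSetR G ψ₁ r) * Nat.card (solSetR G ψ₂ r) := by
  rw [solSetR_combineF]
  have he : ((fun v : Fin (q+p) → V => ((v ∘ Fin.castAdd p, v ∘ Fin.natAdd q) :
      (Fin q → V) × (Fin p → V))) ⁻¹' ((solSetR G ψ₁ r) ×ˢ (solSetR G ψ₂ r)))
      ≃ ((solSetR G ψ₁ r) ×ˢ (solSetR G ψ₂ r) : Set ((Fin q → V) × (Fin p → V))) :=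
    Equiv.subtypeEquiv (Fin.appendEquiv q p).symm (fun a => Iff.rfl)
  rw [Nat.card_congr he, Nat.card_congr (Equiv.Set.prod _ _), Nat.card_prod]

end
end RootProof

namespace RootProof
noncomputable section
variable {W : Type} [MeasurableSpace W]

lemma measurePreserving_split (ν : Measure W) [SigmaFinite ν] (q p : ℕ) :
    MeasurePreserving
      (fun v : Fin (q+p) → W => ((v ∘ Fin.castAdd p, v ∘ Fin.natAdd q) :
        (Fin q → W) × (Fin p → W)))
      (Measure.pi fun _ : Fin (q+p) => ν)
      ((Measure.pi fun _ : Fin q => ν).prod (Measure.pi fun _ : Fin p => ν)) := by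
  have h1 := (measurePreserving_piCongrLeft (fun _ : Fin (q+p) => ν) finSumFinEquiv).symm
  have h2 := measurePreserving_sumPiEquivProdPi (X := fun _ : Fin q ⊕ Fin p => W)
      (fun _ => ν)
  have h3 := h2.comp h1
  convert h3 using 1
  funext v
  ext i <;> simp [MeasurableEquiv.sumPiEquivProdPi, MeasurableEquiv.piCongrLeft, Equiv.sumPiEquivProdPi]

end
end RootProof

namespace RootProof
noncomputable section
variable {V W : Type} [MeasurableSpace W]

lemma measure_solSetR_combineF (L : SimpleGraph W) (ν : Measure W) [SigmaFinite ν]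
    (hmeas : ∀ (p : ℕ) (φ : Language.graph.Formula (Fin p)), MeasurableSet (solSet L φ))
    {q p : ℕ} (ψ₁ : Language.graph.Formula (Fin (q+1)))
    (ψ₂ : Language.graph.Formula (Fin (p+1))) (r : W) :
    (Measure.pi fun _ : Fin (q+p) => ν) (solSetR L (combineF ψ₁ ψ₂) r)
      = (Measure.pi fun _ : Fin q => ν) (solSetR L ψ₁ r)
        * (Measure.pi fun _ : Fin p => ν) (solSetR L ψ₂ r) := by
  rw [solSetR_combineF]
  rw [(measurePreserving_split ν q p).measure_preimage
    (((meas_solSetR L hmeas ψ₁ r).prod (meas_solSetR L hmeas ψ₂ r)).nullMeasurableSet)]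
  exact Measure.prod_prod _ _

lemma stoneLR_combineF (L : SimpleGraph W) (ν : Measure W) [IsProbabilityMeasure ν]
    (hmeas : ∀ (p : ℕ) (φ : Language.graph.Formula (Fin p)), MeasurableSet (solSet L φ))
    {q p : ℕ} (ψ₁ : Language.graph.Formula (Fin (q+1)))
    (ψ₂ : Language.graph.Formula (Fin (p+1))) (r : W) :
    stoneLR L ν (combineF ψ₁ ψ₂) r = stoneLR L ν ψ₁ r * stoneLR L ν ψ₂ r := by
  unfold stoneLR
  rw [measure_solSetR_combineF L ν hmeas ψ₁ ψ₂ r, ENNReal.toReal_mul]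

lemma stoneGR_combineF (fV : Fintype V) (G : SimpleGraph V) (hV : Nonempty V)
    {q p : ℕ} (ψ₁ : Language.graph.Formula (Fin (q+1)))
    (ψ₂ : Language.graph.Formula (Fin (p+1))) (r : V) :
    stoneGR fV G (combineF ψ₁ ψ₂) r = stoneGR fV G ψ₁ r * stoneGR fV G ψ₂ r := by
  unfold stoneGR
  rw [natCard_solSetR_combineF fV G ψ₁ ψ₂ r]
  rw [Nat.cast_mul, pow_add]
  field_simp

-- base case: top formula in Fin (0+1)
lemma stoneGR_top (fV : Fintype V) (G : SimpleGraph V) (r : V) :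
    stoneGR fV G (⊤ : Language.graph.Formula (Fin (0+1))) r = 1 := by
  letI := G.structure
  unfold stoneGR
  have : solSetR G (⊤ : Language.graph.Formula (Fin (0+1))) r = Set.univ := by
    ext v; simp [solSetR]
  rw [this]
  simp [Nat.card_eq_fintype_card]

lemma stoneLR_top (L : SimpleGraph W) (ν : Measure W) [IsProbabilityMeasure ν] (r : W) :
    stoneLR L ν (⊤ : Language.graph.Formula (Fin (0+1))) r = 1 := by
  letI := L.structure
  unfold stoneLR
  have : solSetR L (⊤ : Language.graph.Formula (Fin (0+1))) r = Set.univ := by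
    ext v; simp [solSetR]
  rw [this]
  simp

end
end RootProof

namespace RootProof
noncomputable section
variable {V W : Type} [MeasurableSpace W]

def FSig : Type := (P : ℕ) × Language.graph.Formula (Fin (P+1))

def combineS (a b : FSig) : FSig := ⟨a.1 + b.1, combineF a.2 b.2⟩

def bigProd (l : List FSig) : FSig := l.foldr combineS ⟨0, ⊤⟩

lemma stoneGR_bigProd (fV : Fintype V) (G : SimpleGraph V) (hV : Nonempty V)
    (l : List FSig) (r : V) :
    stoneGR fV G (bigProd l).2 r = (l.map (fun a => stoneGR fV G a.2 r)).prod := by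
  induction l with
  | nil => exact stoneGR_top fV G r
  | cons a l ih =>
      rw [show bigProd (a :: l) = combineS a (bigProd l) from rfl]
      rw [List.map_cons, List.prod_cons, ← ih]
      exact stoneGR_combineF fV G hV a.2 (bigProd l).2 r

lemma stoneLR_bigProd (L : SimpleGraph W) (ν : Measure W) [IsProbabilityMeasure ν]
    (hmeas : ∀ (p : ℕ) (φ : Language.graph.Formula (Fin p)), MeasurableSet (solSet L φ))
    (l : List FSig) (r : W) :
    stoneLR L ν (bigProd l).2 r = (l.map (fun a => stoneLR L ν a.2 r)).prod := by
  induction l with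
  | nil => exact stoneLR_top L ν r
  | cons a l ih =>
      rw [show bigProd (a :: l) = combineS a (bigProd l) from rfl]
      rw [List.map_cons, List.prod_cons, ← ih]
      exact stoneLR_combineF L ν hmeas a.2 (bigProd l).2 r

-- products over exponent vectors
def expList {d : ℕ} (F : Fin d → FSig) (m : Fin d → ℕ) : List FSig :=
  (List.finRange d).flatMap (fun j => List.replicate (m j) (F j))

lemma prod_map_expList {d : ℕ} (F : Fin d → FSig) (m : Fin d → ℕ) (f : FSig → ℝ) :
    ((expList F m).map f).prod = ∏ j : Fin d, f (F j) ^ m j := by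
  rw [expList, List.map_flatMap, List.flatMap, List.prod_flatten, List.map_map,
    Fin.prod_univ_def]
  exact congrArg List.prod (List.map_congr_left (fun j _ => by
    simp [List.prod_replicate]))

end
end RootProof

namespace RootProof
noncomputable section
variable {V W : Type} [MeasurableSpace W]

lemma stoneGR_nonneg (fV : Fintype V) (G : SimpleGraph V) {p : ℕ}
    (φ : Language.graph.Formula (Fin (p+1))) (r : V) : 0 ≤ stoneGR fV G φ r := by
  unfold stoneGR
  positivity

lemma stoneGR_le_one (fV : Fintype V) (G : SimpleGraph V) (hV : Nonempty V) {p : ℕ}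
    (φ : Language.graph.Formula (Fin (p+1))) (r : V) : stoneGR fV G φ r ≤ 1 := by
  unfold stoneGR
  rw [div_le_one (by positivity)]
  have h1 : Nat.card (solSetR G φ r) ≤ Nat.card (Fin p → V) :=
    Nat.card_le_card_of_injective Subtype.val Subtype.val_injective
  have h2 : Nat.card (Fin p → V) = Fintype.card V ^ p := by
    simp [Nat.card_eq_fintype_card]
  calc (Nat.card (solSetR G φ r) : ℝ) ≤ (Fintype.card V ^ p : ℕ) := by
        exact_mod_cast h1.trans_eq h2
    _ = (Fintype.card V : ℝ) ^ p := by push_cast; ring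

end
end RootProof

namespace RootProof
noncomputable section
variable {V W : Type} [MeasurableSpace W]

open FirstOrder.Language

def distinctF (P t : ℕ) : Language.graph.BoundedFormula (Fin P) t :=
  BoundedFormula.iInf (fun s : {s : Fin t × Fin t // s.1 ≠ s.2} =>
    (Term.bdEqual (Term.var (Sum.inr s.1.1)) (Term.var (Sum.inr s.1.2))).not)

def ximem (ξ : Language.graph.Formula (Fin 1)) (P t : ℕ) (s : Fin t) :
    Language.graph.BoundedFormula (Fin P) t :=
  BoundedFormula.relabel (fun _ : Fin 1 => Sum.inr s) ξ

def phimem {P : ℕ} (Φ : Language.graph.Formula (Fin (P+1))) (t : ℕ) (s : Fin t) :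
    Language.graph.BoundedFormula (Fin P) t :=
  BoundedFormula.relabel (Fin.lastCases (Sum.inr s) (fun i => Sum.inl i)) Φ

def theta (ξ : Language.graph.Formula (Fin 1)) {P : ℕ}
    (Φ : Language.graph.Formula (Fin (P+1))) (t : ℕ) : Language.graph.Formula (Fin P) :=
  (distinctF P t ⊓ BoundedFormula.iInf
    (fun s : Fin t => ximem ξ P t s ⊓ phimem Φ t s)).exs

lemma realize_ximem (G : SimpleGraph V) (ξ : Language.graph.Formula (Fin 1))
    {P t : ℕ} (s : Fin t) (v : Fin P → V) (xs : Fin t → V) :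
    letI := G.structure
    ((ximem ξ P t s).Realize v xs ↔ xs s ∈ sol1 G ξ) := by
  letI := G.structure
  rw [ximem, BoundedFormula.realize_relabel]
  have h1 : (Sum.elim v (xs ∘ Fin.castAdd 0) ∘ fun _ : Fin 1 => (Sum.inr s : Fin P ⊕ Fin t))
      = fun _ => xs s := by funext u; rfl
  rw [h1, Subsingleton.elim (xs ∘ Fin.natAdd t : Fin 0 → V) default]
  exact Iff.rfl

lemma realize_phimem (G : SimpleGraph V) {P : ℕ}
    (Φ : Language.graph.Formula (Fin (P+1))) {t : ℕ} (s : Fin t)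
    (v : Fin P → V) (xs : Fin t → V) :
    letI := G.structure
    ((phimem Φ t s).Realize v xs ↔ v ∈ solSetR G Φ (xs s)) := by
  letI := G.structure
  rw [phimem, show (xs : Fin (t+0) → V) = xs from rfl]
  rw [BoundedFormula.realize_relabel]
  unfold solSetR Formula.Realize
  have key : (Sum.elim v (xs ∘ Fin.castAdd 0) ∘ (Fin.lastCases (Sum.inr s)
      (fun i => Sum.inl i) : Fin (P+1) → Fin P ⊕ Fin t)) = Fin.snoc v (xs s) := by
    funext i
    induction i using Fin.lastCases with
    | last => simp [Fin.castAdd_zero]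
    | cast i => simp
  rw [key, Subsingleton.elim (xs ∘ Fin.natAdd t : Fin 0 → V) default]
  exact Iff.rfl

lemma realize_theta (G : SimpleGraph V) (ξ : Language.graph.Formula (Fin 1))
    {P : ℕ} (Φ : Language.graph.Formula (Fin (P+1))) (t : ℕ) (v : Fin P → V) :
    letI := G.structure
    ((theta ξ Φ t).Realize v ↔ ∃ xs : Fin t → V, Function.Injective xs ∧
      ∀ s, xs s ∈ sol1 G ξ ∧ v ∈ solSetR G Φ (xs s)) := by
  letI := G.structure
  rw [theta, BoundedFormula.realize_exs]
  apply exists_congr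
  intro xs
  rw [BoundedFormula.realize_inf]
  constructor
  · rintro ⟨h1, h2⟩
    refine ⟨?_, ?_⟩
    · intro s1 s2 hss
      by_contra hne
      have := BoundedFormula.realize_iInf.1 h1 ⟨(s1, s2), hne⟩
      simp [BoundedFormula.realize_not, Term.realize] at this
      exact this hss
    · intro s
      have := BoundedFormula.realize_iInf.1 h2 s
      rw [BoundedFormula.realize_inf] at this
      exact ⟨(realize_ximem G ξ s v xs).1 this.1, (realize_phimem G Φ s v xs).1 this.2⟩
  · rintro ⟨hinj, hmem⟩
    constructor
    · rw [distinctF, BoundedFormula.realize_iInf]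
      rintro ⟨⟨s1, s2⟩, hs⟩
      change s1 ≠ s2 at hs
      simp only [BoundedFormula.realize_not, Term.bdEqual, BoundedFormula.realize_bdEqual,
        Term.realize]
      intro h
      exact hs (hinj h)
    · rw [BoundedFormula.realize_iInf]
      intro s
      rw [BoundedFormula.realize_inf]
      exact ⟨(realize_ximem G ξ s v xs).2 (hmem s).1, (realize_phimem G Φ s v xs).2 (hmem s).2⟩

lemma exists_inj_iff {X : Type} (S : Set X) (hS : S.Finite) (t : ℕ) :
    (∃ xs : Fin t → X, Function.Injective xs ∧ ∀ s, xs s ∈ S) ↔ t ≤ Nat.card S := by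
  constructor
  · rintro ⟨xs, hinj, hmem⟩
    haveI := hS.to_subtype
    have : Function.Injective (fun s : Fin t => (⟨xs s, hmem s⟩ : S)) := by
      intro a b hab
      exact hinj (congrArg Subtype.val hab)
    simpa using Nat.card_le_card_of_injective _ this
  · intro ht
    haveI := hS.fintype
    rw [Nat.card_eq_fintype_card] at ht
    have : Nonempty (Fin t ↪ S) := by
      rw [Function.Embedding.nonempty_iff_card_le]
      simpa using ht
    obtain ⟨emb⟩ := this
    exact ⟨fun s => (emb s : X), fun a b hab => emb.injective (Subtype.ext hab),
      fun s => (emb s).2⟩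

end
end RootProof

namespace RootProof
noncomputable section
variable {V W : Type} [MeasurableSpace W]

lemma icc_filter_le {c k : ℕ} (h : c ≤ k) :
    (Finset.Icc 1 k).filter (fun t => t ≤ c) = Finset.Icc 1 c := by
  ext t; simp only [Finset.mem_filter, Finset.mem_Icc]; omega

lemma solSet_theta (G : SimpleGraph V) (ξ : Language.graph.Formula (Fin 1))
    (hfin : (sol1 G ξ).Finite) {P : ℕ} (Φ : Language.graph.Formula (Fin (P+1))) (t : ℕ) :
    solSet G (theta ξ Φ t)
      = {v | t ≤ Nat.card {r : V | r ∈ sol1 G ξ ∧ v ∈ solSetR G Φ r}} := by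
  ext v
  rw [solSet, Set.mem_setOf_eq, realize_theta G ξ Φ t v, Set.mem_setOf_eq,
    ← exists_inj_iff _ (hfin.subset (fun r hr => hr.1))]
  simp only [Set.mem_setOf_eq]

lemma sum_theta_G (fV : Fintype V) (G : SimpleGraph V) (hV : Nonempty V)
    (ξ : Language.graph.Formula (Fin 1)) {P : ℕ}
    (Φ : Language.graph.Formula (Fin (P+1))) {k : ℕ}
    (hk : Nat.card (sol1 G ξ) = k) :
    ∑ t ∈ Finset.Icc 1 k, stoneG fV G (theta ξ Φ t)
      = ∑ r ∈ (Set.toFinite (sol1 G ξ)).toFinset, stoneGR fV G Φ r := by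
  classical
  unfold stoneG stoneGR
  rw [← Finset.sum_div, ← Finset.sum_div]
  congr 1
  rw [← Nat.cast_sum, ← Nat.cast_sum]
  congr 1
  -- now a Nat identity
  set A : Finset V := (Set.toFinite (sol1 G ξ)).toFinset with hA
  have hAmem : ∀ r, r ∈ A ↔ r ∈ sol1 G ξ := by
    intro r; rw [hA, Set.Finite.mem_toFinset]
  have hAcard : A.card = k := by
    rw [← hk, Nat.card_coe_set_eq,
      Set.ncard_eq_toFinset_card (sol1 G ξ) (Set.toFinite (sol1 G ξ)), hA]
  set cnt : (Fin P → V) → ℕ := fun v => (A.filter (fun r => v ∈ solSetR G Φ r)).card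
    with hcnt
  have hcnt_le : ∀ v, cnt v ≤ k := fun v => hAcard ▸ Finset.card_filter_le _ _
  have hsetcard : ∀ (S : Set (Fin P → V)), Nat.card S
      = (Finset.univ.filter (· ∈ S)).card := by
    intro S
    rw [Nat.card_coe_set_eq, Set.ncard_eq_toFinset_card']
    congr 1
    ext v; simp
  have hcnt_eq : ∀ v, Nat.card {r : V | r ∈ sol1 G ξ ∧ v ∈ solSetR G Φ r} = cnt v := by
    intro v
    have hset : {r : V | r ∈ sol1 G ξ ∧ v ∈ solSetR G Φ r}
        = ↑(A.filter (fun r => v ∈ solSetR G Φ r)) := by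
      ext r; simp [hAmem r]
    rw [hset, Nat.card_coe_set_eq, Set.ncard_coe_finset]
  have hcard_theta : ∀ t, Nat.card (solSet G (theta ξ Φ t))
      = (Finset.univ.filter (fun v => t ≤ cnt v)).card := by
    intro t
    rw [solSet_theta G ξ (Set.toFinite _) Φ t, hsetcard]
    congr 1
    ext v
    simp only [Finset.mem_filter, Set.mem_setOf_eq, hcnt_eq v]
  calc ∑ t ∈ Finset.Icc 1 k, Nat.card (solSet G (theta ξ Φ t))
      = ∑ t ∈ Finset.Icc 1 k, ∑ v : Fin P → V, if t ≤ cnt v then 1 else 0 := by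
        refine Finset.sum_congr rfl (fun t _ => ?_)
        rw [hcard_theta t, Finset.card_filter]
    _ = ∑ v : Fin P → V, ∑ t ∈ Finset.Icc 1 k, if t ≤ cnt v then 1 else 0 :=
        Finset.sum_comm
    _ = ∑ v : Fin P → V, cnt v := by
        refine Finset.sum_congr rfl (fun v _ => ?_)
        rw [← Finset.card_filter, icc_filter_le (hcnt_le v), Nat.card_Icc]
        omega
    _ = ∑ v : Fin P → V, ∑ r ∈ A, if v ∈ solSetR G Φ r then 1 else 0 := by
        refine Finset.sum_congr rfl (fun v _ => ?_)
        exact Finset.card_filter _ _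
    _ = ∑ r ∈ A, ∑ v : Fin P → V, if v ∈ solSetR G Φ r then 1 else 0 :=
        Finset.sum_comm
    _ = ∑ r ∈ A, Nat.card (solSetR G Φ r) := by
        refine Finset.sum_congr rfl (fun r _ => ?_)
        rw [hsetcard, Finset.card_filter]

end
end RootProof

namespace RootProof
noncomputable section
variable {W : Type} [MeasurableSpace W]

lemma sum_theta_L (L : SimpleGraph W) (ν : Measure W) [IsProbabilityMeasure ν]
    (hmeas : ∀ (p : ℕ) (φ : Language.graph.Formula (Fin p)), MeasurableSet (solSet L φ))
    (ξ : Language.graph.Formula (Fin 1)) (hfin : (sol1 L ξ).Finite) {P : ℕ}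
    (Φ : Language.graph.Formula (Fin (P+1))) {k : ℕ}
    (hk : Nat.card (sol1 L ξ) = k) :
    ∑ t ∈ Finset.Icc 1 k, stoneL L ν (theta ξ Φ t)
      = ∑ r ∈ hfin.toFinset, stoneLR L ν Φ r := by
  classical
  set μ : Measure (Fin P → W) := Measure.pi (fun _ : Fin P => ν) with hμ
  haveI : IsProbabilityMeasure μ := by rw [hμ]; infer_instance
  set R : Finset W := hfin.toFinset with hR
  have hRmem : ∀ r, r ∈ R ↔ r ∈ sol1 L ξ := by
    intro r; rw [hR, Set.Finite.mem_toFinset]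
  have hRcard : R.card = k := by
    rw [← hk, Nat.card_coe_set_eq, Set.ncard_eq_toFinset_card (sol1 L ξ) hfin, hR]
  set cnt : (Fin P → W) → ℕ := fun v => (R.filter (fun r => v ∈ solSetR L Φ r)).card
    with hcnt
  have hcnt_le : ∀ v, cnt v ≤ k := fun v => hRcard ▸ Finset.card_filter_le _ _
  have hcnt_eq : ∀ v, Nat.card {r : W | r ∈ sol1 L ξ ∧ v ∈ solSetR L Φ r} = cnt v := by
    intro v
    have hset : {r : W | r ∈ sol1 L ξ ∧ v ∈ solSetR L Φ r}
        = ↑(R.filter (fun r => v ∈ solSetR L Φ r)) := by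
      ext r; simp [hRmem r]
    rw [hset, Nat.card_coe_set_eq, Set.ncard_coe_finset]
  have hsets : ∀ t, solSet L (theta ξ Φ t) = {v | t ≤ cnt v} := by
    intro t
    rw [solSet_theta L ξ hfin Φ t]
    ext v
    simp only [Set.mem_setOf_eq, hcnt_eq v]
  have key : ∑ t ∈ Finset.Icc 1 k, μ (solSet L (theta ξ Φ t))
      = ∑ r ∈ R, μ (solSetR L Φ r) := by
    have hmA : ∀ t : ℕ, MeasurableSet (solSet L (theta ξ Φ t)) := fun t => hmeas _ _
    have hmS : ∀ r : W, MeasurableSet (solSetR L Φ r) := fun r => meas_solSetR L hmeas Φ r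
    calc ∑ t ∈ Finset.Icc 1 k, μ (solSet L (theta ξ Φ t))
        = ∑ t ∈ Finset.Icc 1 k, ∫⁻ v, (solSet L (theta ξ Φ t)).indicator 1 v ∂μ := by
          refine Finset.sum_congr rfl (fun t _ => ?_)
          rw [lintegral_indicator_one (hmA t)]
      _ = ∫⁻ v, ∑ t ∈ Finset.Icc 1 k, (solSet L (theta ξ Φ t)).indicator 1 v ∂μ := by
          rw [lintegral_finset_sum]
          exact fun t _ => measurable_const.indicator (hmA t)
      _ = ∫⁻ v, ∑ r ∈ R, (solSetR L Φ r).indicator 1 v ∂μ := by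
          congr 1
          funext v
          have lhs : ∑ t ∈ Finset.Icc 1 k, (solSet L (theta ξ Φ t)).indicator
              (1 : (Fin P → W) → ℝ≥0∞) v = (cnt v : ℝ≥0∞) := by
            have : ∀ t, (solSet L (theta ξ Φ t)).indicator (1 : (Fin P → W) → ℝ≥0∞) v
                = if t ≤ cnt v then 1 else 0 := by
              intro t
              rw [hsets t, Set.indicator_apply]
              simp only [Set.mem_setOf_eq, Pi.one_apply]
            rw [Finset.sum_congr rfl (fun t _ => this t), Finset.sum_boole,
              icc_filter_le (hcnt_le v), Nat.card_Icc]
            simp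
          have rhs : ∑ r ∈ R, (solSetR L Φ r).indicator
              (1 : (Fin P → W) → ℝ≥0∞) v = (cnt v : ℝ≥0∞) := by
            have : ∀ r, (solSetR L Φ r).indicator (1 : (Fin P → W) → ℝ≥0∞) v
                = if v ∈ solSetR L Φ r then 1 else 0 := by
              intro r
              rw [Set.indicator_apply]; simp
            rw [Finset.sum_congr rfl (fun r _ => this r), Finset.sum_boole, hcnt]
          rw [lhs, rhs]
      _ = ∑ r ∈ R, ∫⁻ v, (solSetR L Φ r).indicator 1 v ∂μ := by
          rw [lintegral_finset_sum]
          exact fun r _ => measurable_const.indicator (hmS r)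
      _ = ∑ r ∈ R, μ (solSetR L Φ r) := by
          refine Finset.sum_congr rfl (fun r _ => ?_)
          rw [lintegral_indicator_one (hmS r)]
  unfold stoneL stoneLR
  rw [← ENNReal.toReal_sum (fun t _ => measure_ne_top μ _),
    ← ENNReal.toReal_sum (fun r _ => measure_ne_top μ _)]
  rw [key]

end
end RootProof

namespace RootProof
noncomputable section

open MvPolynomial in
lemma sum_eval_eq {d k : ℕ} (f g : Fin k → (Fin d → ℝ))
    (h : ∀ m : Fin d → ℕ, ∑ s : Fin k, ∏ j : Fin d, f s j ^ m j
      = ∑ s : Fin k, ∏ j : Fin d, g s j ^ m j)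
    (P : MvPolynomial (Fin d) ℝ) :
    ∑ s : Fin k, eval (f s) P = ∑ s : Fin k, eval (g s) P := by
  have key : ∀ x : Fin d → ℝ, eval x P
      = ∑ m ∈ P.support, coeff m P * ∏ j : Fin d, x j ^ m j := by
    intro x
    rw [eval_eq']
  simp only [key]
  rw [Finset.sum_comm]
  conv_rhs => rw [Finset.sum_comm]
  refine Finset.sum_congr rfl (fun m _ => ?_)
  rw [← Finset.mul_sum, ← Finset.mul_sum, h (fun j => m j)]

open MvPolynomial in
lemma exists_eq_of_moments {d k : ℕ} (f g : Fin k → (Fin d → ℝ))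
    (h : ∀ m : Fin d → ℕ, ∑ s : Fin k, ∏ j : Fin d, f s j ^ m j
      = ∑ s : Fin k, ∏ j : Fin d, g s j ^ m j) (s₀ : Fin k) :
    ∃ s, f s = g s₀ := by
  classical
  by_contra hno
  push_neg at hno
  set T : Finset (Fin d → ℝ) :=
    ((Finset.univ.image f) ∪ (Finset.univ.image g)).erase (g s₀) with hT
  set P : MvPolynomial (Fin d) ℝ :=
    ∏ z ∈ T, (∑ j : Fin d, (X j - C (z j))^2) with hP
  have evalP : ∀ x : Fin d → ℝ, eval x P = ∏ z ∈ T, ∑ j : Fin d, (x j - z j)^2 := by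
    intro x
    rw [hP]
    simp
  have hf0 : ∀ s, eval (f s) P = 0 := by
    intro s
    rw [evalP]
    refine Finset.prod_eq_zero (i := f s) ?_ (by simp)
    rw [hT, Finset.mem_erase]
    exact ⟨hno s, Finset.mem_union_left _ (Finset.mem_image_of_mem f (Finset.mem_univ s))⟩
  have hgnn : ∀ s, 0 ≤ eval (g s) P := by
    intro s
    rw [evalP]
    exact Finset.prod_nonneg (fun z _ => Finset.sum_nonneg (fun j _ => sq_nonneg _))
  have hgpos : 0 < eval (g s₀) P := by
    rw [evalP]
    refine Finset.prod_pos (fun z hz => ?_)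
    have hzne : z ≠ g s₀ := (Finset.mem_erase.1 hz).1
    obtain ⟨j, hj⟩ := Function.ne_iff.1 hzne
    refine Finset.sum_pos' (fun j' _ => sq_nonneg _) ⟨j, Finset.mem_univ j, ?_⟩
    have : g s₀ j - z j ≠ 0 := sub_ne_zero.2 (Ne.symm hj)
    positivity
  have h1 : ∑ s : Fin k, eval (f s) P = 0 := Finset.sum_eq_zero (fun s _ => hf0 s)
  have h2 : 0 < ∑ s : Fin k, eval (g s) P :=
    lt_of_lt_of_le hgpos (Finset.single_le_sum (fun s _ => hgnn s) (Finset.mem_univ s₀))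
  rw [← sum_eval_eq f g h P, h1] at h2
  exact lt_irrefl _ h2

end
end RootProof

namespace RootProof
noncomputable section

lemma selection {k : ℕ} (a : ℕ → Fin k → ℕ → ℝ) (b : Fin k → ℕ → ℝ)
    (hbound : ∀ n s j, 0 ≤ a n s j ∧ a n s j ≤ 1)
    (hmom : ∀ (d : ℕ) (m : Fin d → ℕ),
      Tendsto (fun n => ∑ s : Fin k, ∏ j : Fin d, a n s (j:ℕ) ^ m j) atTop
        (nhds (∑ s : Fin k, ∏ j : Fin d, b s (j:ℕ) ^ m j)))
    (s₀ : Fin k) (d : ℕ) :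
    ∃ sel : ℕ → Fin k,
      ∀ j : Fin d, Tendsto (fun n => a n (sel n) (j:ℕ)) atTop (nhds (b s₀ (j:ℕ))) := by
  classical
  haveI : Nonempty (Fin k) := ⟨s₀⟩
  set β : Fin d → ℝ := fun j => b s₀ (j:ℕ) with hβ
  set D : ℕ → ℝ := fun n => Finset.univ.inf' Finset.univ_nonempty
    (fun s => dist (fun j : Fin d => a n s (j:ℕ)) β) with hD
  have hDnonneg : ∀ n, 0 ≤ D n := by
    intro n
    rw [hD]
    simp only [Finset.le_inf'_iff]
    exact fun s _ => dist_nonneg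
  have hDle : ∀ n s, D n ≤ dist (fun j : Fin d => a n s (j:ℕ)) β := by
    intro n s
    exact Finset.inf'_le _ (Finset.mem_univ s)
  have hDtendsto : Tendsto D atTop (nhds 0) := by
    apply tendsto_of_subseq_tendsto
    intro ns hns
    -- compactness
    set K : Set (Fin k × Fin d → ℝ) := Set.Icc 0 1 with hK
    have hKc : IsCompact K := isCompact_Icc
    have hmemK : ∀ n, (fun sj : Fin k × Fin d => a (ns n) sj.1 (sj.2 : ℕ)) ∈ K := by
      intro n
      rw [hK]
      constructor <;> intro sj
      · exact (hbound _ _ _).1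
      · exact (hbound _ _ _).2
    obtain ⟨c, -, ms, hms, hconv⟩ := hKc.tendsto_subseq hmemK
    have hcoord : ∀ (s : Fin k) (j : Fin d), Tendsto (fun n => a (ns (ms n)) s (j:ℕ)) atTop
        (nhds (c (s, j))) := by
      intro s j
      have := tendsto_pi_nhds.1 hconv (s, j)
      exact this
    -- moments of c equal moments of b
    have hmomc : ∀ m : Fin d → ℕ, ∑ s : Fin k, ∏ j : Fin d, c (s, j) ^ m j
        = ∑ s : Fin k, ∏ j : Fin d, b s (j:ℕ) ^ m j := by
      intro m
      have h1 : Tendsto (fun n => ∑ s : Fin k, ∏ j : Fin d, a (ns (ms n)) s (j:ℕ) ^ m j)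
          atTop (nhds (∑ s : Fin k, ∏ j : Fin d, c (s, j) ^ m j)) := by
        apply tendsto_finset_sum
        intro s _
        apply tendsto_finset_prod
        intro j _
        exact (hcoord s j).pow (m j)
      have h2 : Tendsto (fun n => ∑ s : Fin k, ∏ j : Fin d, a (ns (ms n)) s (j:ℕ) ^ m j)
          atTop (nhds (∑ s : Fin k, ∏ j : Fin d, b s (j:ℕ) ^ m j)) :=
        (hmom d m).comp ((hns.comp hms.tendsto_atTop))
      exact tendsto_nhds_unique h1 h2
    obtain ⟨sS, hsS⟩ := exists_eq_of_moments (fun s j => c (s, j)) (fun s j => b s (j:ℕ))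
      hmomc s₀
    refine ⟨ms, ?_⟩
    have hrow : Tendsto (fun n => (fun j : Fin d => a (ns (ms n)) sS (j:ℕ))) atTop
        (nhds (fun j : Fin d => c (sS, j))) := by
      rw [tendsto_pi_nhds]
      exact fun j => hcoord sS j
    have hdist : Tendsto (fun n => dist (fun j : Fin d => a (ns (ms n)) sS (j:ℕ)) β)
        atTop (nhds 0) := by
      have := hrow.dist (tendsto_const_nhds (x := β))
      have hzero : dist (fun j : Fin d => c (sS, j)) β = 0 := by
        rw [dist_eq_zero]
        funext j
        exact congrFun hsS j
      rwa [hzero] at this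
    exact squeeze_zero (fun n => hDnonneg _) (fun n => hDle _ _) hdist
  -- choose minimizers
  have hex : ∀ n, ∃ s : Fin k, D n = dist (fun j : Fin d => a n s (j:ℕ)) β := by
    intro n
    obtain ⟨s, _, hs⟩ := Finset.exists_mem_eq_inf' (Finset.univ_nonempty)
      (fun s : Fin k => dist (fun j : Fin d => a n s (j:ℕ)) β)
    exact ⟨s, hs⟩
  choose sel hsel using hex
  refine ⟨sel, fun j => ?_⟩
  rw [tendsto_iff_dist_tendsto_zero]
  refine squeeze_zero (fun n => dist_nonneg) (fun n => ?_) hDtendsto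
  calc dist (a n (sel n) (j:ℕ)) (b s₀ (j:ℕ))
      ≤ dist (fun j' : Fin d => a n (sel n) (j':ℕ)) β := by
        have := dist_le_pi_dist (fun j' : Fin d => a n (sel n) (j':ℕ)) β j
        simpa [hβ] using this
    _ = D n := (hsel n).symm

end
end RootProof


open RootProof in
/-- Lemma: existence of an extending collection of roots. Here `e` is an
enumeration of all rooted first-order formulas (a formula `φᵢ` has `pᵢ` free variables plus
the distinguished root variable, encoded as the last variable). -/
theorem collection_of_extending_rootings

    (V : ℕ → Type) (fV : ∀ n, Fintype (V n)) (hVne : ∀ n, Nonempty (V n))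
    (G : ∀ n, SimpleGraph (V n))
    (W : Type) [MeasurableSpace W] [StandardBorelSpace W]
    (L : SimpleGraph W) (ν : Measure W) [IsProbabilityMeasure ν]
    (hmeas : ∀ (p : ℕ) (φ : Language.graph.Formula (Fin p)), MeasurableSet (solSet L φ))
    (hFOconv : ∀ (p : ℕ) (φ : Language.graph.Formula (Fin p)),
      ∃ c : ℝ, Tendsto (fun n => stoneG (fV n) (G n) φ) atTop (nhds c))
    (hlim : ∀ (p : ℕ) (φ : Language.graph.Formula (Fin p)),
      Tendsto (fun n => stoneG (fV n) (G n) φ) atTop (nhds (stoneL L ν φ)))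
    (ξ : Language.graph.Formula (Fin 1))
    (hfin : (sol1 L ξ).Finite) (hnonempty : (sol1 L ξ).Nonempty)
    (hmin : ∀ ψ : Language.graph.Formula (Fin 1),
      sol1 L ψ ⊆ sol1 L ξ → sol1 L ψ = ∅ ∨ sol1 L ψ = sol1 L ξ)
    (hcard : ∀ n, Nat.card (sol1 (G n) ξ) = Nat.card (sol1 L ξ))
    (e : ℕ → (p : ℕ) × Language.graph.Formula (Fin (p + 1)))
    (henum : Function.Surjective e) :
    ∃ (rr : ℕ → (n : ℕ) → V n) (r : ℕ → W),
      (∀ i n, rr i n ∈ sol1 (G n) ξ) ∧ (∀ i, r i ∈ sol1 L ξ) ∧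
      ∀ i j, j ≤ i →
        (Tendsto (fun n => stoneGR (fV n) (G n) (e j).2 (rr i n)) atTop
            (nhds (stoneLR L ν (e j).2 (r i)))) ∧
        (∀ i', i ≤ i' → stoneLR L ν (e j).2 (r i) = stoneLR L ν (e j).2 (r i')) := by
  classical
  set k := Nat.card (sol1 L ξ) with hkdef
  haveI hfinsub : Finite ↥(sol1 L ξ) := hfin.to_subtype
  haveI : Nonempty ↥(sol1 L ξ) := hnonempty.to_subtype
  have hk0 : 0 < k := Nat.card_pos
  haveI hFtL : Fintype ↥(sol1 L ξ) := hfin.fintype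
  have hcardL : Fintype.card ↥(sol1 L ξ) = k := by
    rw [← Nat.card_eq_fintype_card]
  have hFt : ∀ n, Fintype ↥(sol1 (G n) ξ) := fun n =>
    letI := fV n; (Set.toFinite _).fintype
  have hcards : ∀ n, @Fintype.card _ (hFt n) = k := fun n => by
    rw [← Nat.card_eq_fintype_card, hcard n]
  set eL : Fin k ≃ ↥(sol1 L ξ) := (Fintype.equivFinOfCardEq hcardL).symm with heL
  set en : ∀ n, Fin k ≃ ↥(sol1 (G n) ξ) := fun n =>
    (@Fintype.equivFinOfCardEq _ (hFt n) k (hcards n)).symm with hen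
  set a : ℕ → Fin k → ℕ → ℝ := fun n s j =>
    stoneGR (fV n) (G n) (e j).2 ((en n s) : V n) with ha
  set b : Fin k → ℕ → ℝ := fun s j => stoneLR L ν (e j).2 ((eL s) : W) with hb
  have hbound : ∀ n s j, 0 ≤ a n s j ∧ a n s j ≤ 1 := fun n s j =>
    ⟨stoneGR_nonneg _ _ _ _, stoneGR_le_one _ _ (hVne n) _ _⟩
  have hmom : ∀ (d : ℕ) (m : Fin d → ℕ),
      Tendsto (fun n => ∑ s : Fin k, ∏ j : Fin d, a n s (j:ℕ) ^ m j) atTop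
        (nhds (∑ s : Fin k, ∏ j : Fin d, b s (j:ℕ) ^ m j)) := by
    intro d m
    set Φsig : FSig := bigProd (expList (fun j : Fin d => e (j:ℕ)) m) with hΦ
    have hG : ∀ n, ∑ s : Fin k, ∏ j : Fin d, a n s (j:ℕ) ^ m j
        = ∑ t ∈ Finset.Icc 1 k, stoneG (fV n) (G n) (theta ξ Φsig.2 t) := by
      intro n
      letI := fV n
      rw [sum_theta_G (fV n) (G n) (hVne n) ξ Φsig.2 (hcard n)]
      rw [Finset.sum_subtype _ (fun r => (Set.Finite.mem_toFinset _))
        (fun r => stoneGR (fV n) (G n) Φsig.2 r)]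
      rw [← Equiv.sum_comp (en n) (fun x => stoneGR (fV n) (G n) Φsig.2 (x : V n))]
      refine Finset.sum_congr rfl (fun s _ => ?_)
      rw [hΦ, stoneGR_bigProd (fV n) (G n) (hVne n)]
      exact (prod_map_expList (fun j : Fin d => e (j:ℕ)) m
        (fun a : FSig => stoneGR (fV n) (G n) a.2 ((en n s) : V n))).symm
    have hL : ∑ s : Fin k, ∏ j : Fin d, b s (j:ℕ) ^ m j
        = ∑ t ∈ Finset.Icc 1 k, stoneL L ν (theta ξ Φsig.2 t) := by
      rw [sum_theta_L L ν hmeas ξ hfin Φsig.2 rfl]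
      rw [Finset.sum_subtype _ (fun r => (Set.Finite.mem_toFinset _))
        (fun r => stoneLR L ν Φsig.2 r)]
      rw [← Equiv.sum_comp eL (fun x => stoneLR L ν Φsig.2 (x : W))]
      refine Finset.sum_congr rfl (fun s _ => ?_)
      rw [hΦ, stoneLR_bigProd L ν hmeas]
      exact (prod_map_expList (fun j : Fin d => e (j:ℕ)) m
        (fun a : FSig => stoneLR L ν a.2 ((eL s) : W))).symm
    simp only [hG]
    rw [hL]
    exact tendsto_finset_sum _ (fun t _ => hlim _ (theta ξ Φsig.2 t))
  have hsel : ∀ i : ℕ, ∃ sel : ℕ → Fin k,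
      ∀ j : Fin (i+1), Tendsto (fun n => a n (sel n) (j:ℕ)) atTop
        (nhds (b ⟨0, hk0⟩ (j:ℕ))) :=
    fun i => selection a b hbound hmom ⟨0, hk0⟩ (i+1)
  choose sel hselspec using hsel
  refine ⟨fun i n => ((en n (sel i n)) : V n), fun _ => ((eL ⟨0, hk0⟩) : W),
    fun i n => (en n (sel i n)).2, fun i => (eL ⟨0, hk0⟩).2, fun i j hj => ⟨?_, fun i' _ => rfl⟩⟩
  exact hselspec i ⟨j, Nat.lt_succ_of_le hj⟩
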